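/- For n ≥ 2 and a > 2, the pantographic orbit Pan(n,a,h) satisfies the geometric constraint 1/a < t(n,a,h) ≤ 1/√(a(a−2)) if and only if h ≥ (n−1)√(a(a−2)); consequently Pan(n,a,h) exists for all h > (n−1)√(a(a−2)). -/
import Mathlib

open Real

/-- g(T) ≥ 1 when T ≥ 1/s. -/
lemma g_ge_aux (a s T : ℝ) (ha : 2 < a) (hs0 : 0 < s) (hs2 : s ^ 2 = a * (a - 2))
    (hT : 1 / s ≤ T) :
    1 ≤ ((a ^ 2 - 2) * T ^ 2 - 1) / (2 * T * Real.sqrt (1 + T ^ 2)) := by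
  have hT0 : 0 < T := lt_of_lt_of_le (by positivity) hT
  set R := Real.sqrt (1 + T ^ 2) with hRdef
  have hR0 : 0 < R := Real.sqrt_pos.mpr (by positivity)
  have hR2 : R ^ 2 = 1 + T ^ 2 := Real.sq_sqrt (by positivity)
  -- from T ≥ 1/s : T^2 * s^2 ≥ 1, i.e. a(a-2) T² ≥ 1
  have hu : 1 ≤ a * (a - 2) * T ^ 2 := by
    have h1 : 1 / s ≤ T := hT
    have : (1 / s) ^ 2 ≤ T ^ 2 := by
      apply pow_le_pow_left₀ (by positivity) h1
    have h2 : 1 / s ^ 2 ≤ T ^ 2 := by rwa [div_pow, one_pow] at this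
    rw [div_le_iff₀ (by positivity)] at h2
    nlinarith [h2, hs2]
  have hu2 : 1 ≤ a * (a + 2) * T ^ 2 := by nlinarith [sq_nonneg T]
  have hX0 : 0 ≤ (a ^ 2 - 2) * T ^ 2 - 1 := by nlinarith
  -- X² ≥ (2TR)²
  have hsq : (2 * T * R) ^ 2 ≤ ((a ^ 2 - 2) * T ^ 2 - 1) ^ 2 := by
    have : (2 * T * R) ^ 2 = 4 * T ^ 2 * (1 + T ^ 2) := by rw [mul_pow, mul_pow, hR2]; ring
    rw [this]
    nlinarith [mul_nonneg (sub_nonneg.mpr hu) (sub_nonneg.mpr hu2)]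
  have hXB : 2 * T * R ≤ (a ^ 2 - 2) * T ^ 2 - 1 := by nlinarith [mul_pos (mul_pos two_pos hT0) hR0]
  rw [le_div_iff₀ (by positivity)]
  linarith

/-- g(T) ≤ 1 when 1/a < T ≤ 1/s. -/
lemma g_le_aux (a s T : ℝ) (ha : 2 < a) (hs0 : 0 < s) (hs2 : s ^ 2 = a * (a - 2))
    (hTa : 1 / a < T) (hT : T ≤ 1 / s) :
    ((a ^ 2 - 2) * T ^ 2 - 1) / (2 * T * Real.sqrt (1 + T ^ 2)) ≤ 1 := by
  have ha0 : (0:ℝ) < a := by linarith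
  have hT0 : 0 < T := lt_trans (by positivity) hTa
  set R := Real.sqrt (1 + T ^ 2) with hRdef
  have hR0 : 0 < R := Real.sqrt_pos.mpr (by positivity)
  have hR2 : R ^ 2 = 1 + T ^ 2 := Real.sq_sqrt (by positivity)
  have hu : a * (a - 2) * T ^ 2 ≤ 1 := by
    have : T ^ 2 ≤ (1 / s) ^ 2 := pow_le_pow_left₀ hT0.le hT 2
    have h2 : T ^ 2 ≤ 1 / s ^ 2 := by rwa [div_pow, one_pow] at this
    rw [le_div_iff₀ (by positivity)] at h2
    nlinarith [h2, hs2]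
  have hu2 : 1 < a * (a + 2) * T ^ 2 := by
    have : (1 / a) ^ 2 < T ^ 2 := by
      apply pow_lt_pow_left₀ hTa (by positivity) (by norm_num)
    have h2 : 1 / a ^ 2 < T ^ 2 := by rwa [div_pow, one_pow] at this
    rw [div_lt_iff₀ (by positivity)] at h2
    nlinarith [h2]
  rw [div_le_one (by positivity)]
  rcases le_or_gt ((a ^ 2 - 2) * T ^ 2 - 1) 0 with hX | hX
  · nlinarith [mul_pos (mul_pos two_pos hT0) hR0]
  · have hsq : ((a ^ 2 - 2) * T ^ 2 - 1) ^ 2 ≤ (2 * T * R) ^ 2 := by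
      have : (2 * T * R) ^ 2 = 4 * T ^ 2 * (1 + T ^ 2) := by rw [mul_pow, mul_pow, hR2]; ring
      rw [this]
      nlinarith [mul_nonneg (sub_nonneg.mpr hu) (sub_nonneg.mpr hu2.le)]
    nlinarith [mul_pos (mul_pos two_pos hT0) hR0]

/-- f monotone: for 0 < x ≤ y, f(x) ≤ f(y); strict if x < y. -/
lemma f_mono_aux (a x y : ℝ) (ha : 0 < a) (hx : 0 < x) (hxy : x ≤ y) :
    (a ^ 2 * x ^ 2 - 1) / (2 * a * x) ≤ (a ^ 2 * y ^ 2 - 1) / (2 * a * y) := by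
  have hy : 0 < y := lt_of_lt_of_le hx hxy
  rw [div_le_div_iff₀ (by positivity) (by positivity)]
  nlinarith [mul_nonneg (mul_nonneg (sub_nonneg.mpr hxy)
    (by positivity : (0:ℝ) ≤ a ^ 2 * x * y + 1)) (by linarith : (0:ℝ) ≤ 2 * a)]

lemma f_strict_aux (a x y : ℝ) (ha : 0 < a) (hx : 0 < x) (hxy : x < y) :
    (a ^ 2 * x ^ 2 - 1) / (2 * a * x) < (a ^ 2 * y ^ 2 - 1) / (2 * a * y) := by
  have hy : 0 < y := lt_trans hx hxy
  rw [div_lt_div_iff₀ (by positivity) (by positivity)]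
  nlinarith [mul_pos (mul_pos (sub_pos.mpr hxy)
    (by positivity : (0:ℝ) < a ^ 2 * x * y + 1)) (by linarith : (0:ℝ) < 2 * a)]

theorem pan_exists_iff (a : ℝ) (n : ℕ) (ha : 2 < a) (hn : 2 ≤ n) (t : ℝ → ℝ)
    (ht : ∀ h : ℝ, 0 < h → 1 / a < t h ∧
      (n : ℝ) = (a ^ 2 * (t h) ^ 2 - 1) / (2 * a * t h) * h +
        ((a ^ 2 - 2) * (t h) ^ 2 - 1) / (2 * t h * Real.sqrt (1 + (t h) ^ 2))) :
    (∀ h : ℝ, 0 < h →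
      (t h ≤ 1 / Real.sqrt (a * (a - 2)) ↔ ((n : ℝ) - 1) * Real.sqrt (a * (a - 2)) ≤ h)) ∧
    ∀ h : ℝ, ((n : ℝ) - 1) * Real.sqrt (a * (a - 2)) < h →
      1 / a < t h ∧ t h ≤ 1 / Real.sqrt (a * (a - 2)) := by
  have ha0 : (0:ℝ) < a := by linarith
  set s := Real.sqrt (a * (a - 2)) with hsdef
  have hs0 : 0 < s := Real.sqrt_pos.mpr (by nlinarith)
  have hs2 : s ^ 2 = a * (a - 2) := Real.sq_sqrt (by nlinarith)
  have hsa : s < a := by nlinarith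
  have hn1 : (1:ℝ) ≤ (n : ℝ) - 1 := by
    have : (2:ℝ) ≤ (n:ℝ) := by exact_mod_cast hn
    linarith
  -- f(1/s) = 1/s
  have hfval : (a ^ 2 * (1 / s) ^ 2 - 1) / (2 * a * (1 / s)) = 1 / s := by
    rw [div_eq_div_iff (by positivity) hs0.ne']
    field_simp
    nlinarith [hs2]
  have key : ∀ h : ℝ, 0 < h →
      (t h ≤ 1 / s ↔ ((n : ℝ) - 1) * s ≤ h) := by
    intro h h0
    obtain ⟨hTa, heq⟩ := ht h h0
    set T := t h with hTdef
    have hT0 : 0 < T := lt_trans (by positivity) hTa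
    constructor
    · intro hTs
      by_contra hh
      push_neg at hh
      have hfle : (a ^ 2 * T ^ 2 - 1) / (2 * a * T) ≤ 1 / s := by
        calc (a ^ 2 * T ^ 2 - 1) / (2 * a * T)
            ≤ (a ^ 2 * (1/s) ^ 2 - 1) / (2 * a * (1/s)) := f_mono_aux a T (1/s) ha0 hT0 hTs
          _ = 1 / s := hfval
      have hfpos : 0 < (a ^ 2 * T ^ 2 - 1) / (2 * a * T) := by
        apply div_pos _ (by positivity)
        have : 1 / a < T := hTa
        rw [div_lt_iff₀ ha0] at this
        nlinarith
      have h1 : (a ^ 2 * T ^ 2 - 1) / (2 * a * T) * h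
          < (a ^ 2 * T ^ 2 - 1) / (2 * a * T) * (((n:ℝ) - 1) * s) :=
        mul_lt_mul_of_pos_left hh hfpos
      have h2 : (a ^ 2 * T ^ 2 - 1) / (2 * a * T) * (((n:ℝ) - 1) * s) ≤
          1 / s * (((n:ℝ) - 1) * s) := by
        apply mul_le_mul_of_nonneg_right hfle (by positivity)
      have h3 : 1 / s * (((n:ℝ) - 1) * s) = (n:ℝ) - 1 := by
        field_simp
      have hg := g_le_aux a s T ha hs0 hs2 hTa hTs
      rw [heq] at *
      linarith [h1, h2, hg]
    · intro hh
      by_contra hTs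
      push_neg at hTs
      have hfgt : 1 / s < (a ^ 2 * T ^ 2 - 1) / (2 * a * T) := by
        calc (1:ℝ) / s = (a ^ 2 * (1/s) ^ 2 - 1) / (2 * a * (1/s)) := hfval.symm
          _ < (a ^ 2 * T ^ 2 - 1) / (2 * a * T) := f_strict_aux a (1/s) T ha0 (by positivity) hTs
      have h1 : 1 / s * h < (a ^ 2 * T ^ 2 - 1) / (2 * a * T) * h :=
        mul_lt_mul_of_pos_right hfgt h0
      have h2 : ((n:ℝ) - 1) ≤ 1 / s * h := by
        have : 1 / s * (((n:ℝ) - 1) * s) ≤ 1 / s * h :=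
          mul_le_mul_of_nonneg_left hh (by positivity)
        calc ((n:ℝ) - 1) = 1 / s * (((n:ℝ) - 1) * s) := by field_simp
          _ ≤ 1 / s * h := this
      have hg := g_ge_aux a s T ha hs0 hs2 hTs.le
      linarith [heq]
  refine ⟨key, fun h hlt => ?_⟩
  have h0 : 0 < h := lt_of_le_of_lt (by positivity) hlt
  exact ⟨(ht h h0).1, (key h h0).mpr hlt.le⟩
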